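/- Let n ≥ 1, T_1, …, T_n ∈ ℝ, and let σ(t) = 1/(1 + e^{−t}). Define the two-threshold rule f by f(x) = 1 if #{i : x_i > T_i} > n/2 and f(x) = 0 if #{i : x_i > T_i} < n/2, and for a, b > 0 define the n-hidden-node network output f̂_{a,b}(x) = σ( b · ( Σ_{j=1}^n σ( a · (x_j − T_j) ) − n/2 ) ). Then for every η > 0 and every δ ∈ (0,1) there exist a, b > 0 such that for every x ∈ ℝⁿ satisfying |x_i − T_i| ≥ η for all i and #{i : x_i > T_i} ≠ n/2, one has |f̂_{a,b}(x) − f(x)| ≤ δ. -/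

import Mathlib

noncomputable def sigmoid (t : ℝ) : ℝ := 1 / (1 + Real.exp (-t))

/-- The two-threshold rule: output 1 iff more than half of the features exceed
their per-feature thresholds. -/
noncomputable def twoThresholdRule (n : ℕ) (T : Fin n → ℝ) (x : Fin n → ℝ) : ℝ :=
  if ((n : ℝ) / 2 < ((Finset.univ.filter fun i => T i < x i).card : ℝ)) then 1 else 0

/-- The `n`-hidden-node MLP approximating the two-threshold rule. -/
noncomputable def twoThresholdNet (n : ℕ) (T : Fin n → ℝ) (a b : ℝ) (x : Fin n → ℝ) : ℝ :=
  sigmoid (b * ((∑ j, sigmoid (a * (x j - T j))) - (n : ℝ) / 2))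

lemma sigmoid_pos (t : ℝ) : 0 < sigmoid t := by
  unfold sigmoid; positivity

lemma sigmoid_le_one (t : ℝ) : sigmoid t ≤ 1 := by
  unfold sigmoid
  rw [div_le_one (by positivity)]
  linarith [Real.exp_pos (-t)]

lemma one_sub_sigmoid_le (t : ℝ) : 1 - sigmoid t ≤ Real.exp (-t) := by
  unfold sigmoid
  have h : 0 < 1 + Real.exp (-t) := by positivity
  have he := Real.exp_pos (-t)
  have h1 : (1:ℝ) - 1 / (1 + Real.exp (-t)) = Real.exp (-t) / (1 + Real.exp (-t)) := by
    field_simp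
    ring
  rw [h1]
  exact div_le_self he.le (by linarith)

lemma sigmoid_le_exp (t : ℝ) : sigmoid t ≤ Real.exp t := by
  unfold sigmoid
  rw [div_le_iff₀ (by positivity)]
  have h : Real.exp t * Real.exp (-t) = 1 := by
    rw [← Real.exp_add]; simp
  nlinarith [Real.exp_pos t]

theorem two_threshold_approximation (n : ℕ) (hn : 1 ≤ n) (T : Fin n → ℝ) :
    ∀ η > (0 : ℝ), ∀ δ ∈ Set.Ioo (0 : ℝ) 1, ∃ a > (0 : ℝ), ∃ b > (0 : ℝ),
      ∀ x : Fin n → ℝ,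
        (∀ i, η ≤ |x i - T i|) →
        (((Finset.univ.filter fun i => T i < x i).card : ℝ) ≠ (n : ℝ) / 2) →
        |twoThresholdNet n T a b x - twoThresholdRule n T x| ≤ δ := by
  intro η hη δ hδ
  obtain ⟨hδ0, hδ1⟩ := hδ
  have hn1 : (1:ℝ) ≤ n := by exact_mod_cast hn
  have hn4 : (1:ℝ) < 4 * n := by linarith
  set a := Real.log (4 * n) / η with ha_def
  have ha : 0 < a := div_pos (Real.log_pos hn4) hη
  have hb : 0 < -4 * Real.log δ := by
    have := Real.log_neg hδ0 hδ1; linarith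
  refine ⟨a, ha, -4 * Real.log δ, hb, ?_⟩
  intro x hx hne
  set b := -4 * Real.log δ with hb_def
  set k := (Finset.univ.filter fun i => T i < x i).card with hk_def
  have haη : Real.exp (-(a * η)) = 1 / (4 * n) := by
    have : a * η = Real.log (4 * n) := by
      rw [ha_def]; field_simp
    rw [this, Real.exp_neg, Real.exp_log (by linarith)]
    ring
  -- per-feature bound
  have key : ∀ j : Fin n,
      |sigmoid (a * (x j - T j)) - (if T j < x j then (1:ℝ) else 0)| ≤ 1 / (4 * n) := by
    intro j
    by_cases h : T j < x j
    · have hd : η ≤ x j - T j := by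
        have := hx j
        rw [abs_of_pos (by linarith)] at this; exact this
      have harg : a * η ≤ a * (x j - T j) := by
        exact mul_le_mul_of_nonneg_left hd ha.le
      have h1 : 1 - sigmoid (a * (x j - T j)) ≤ 1 / (4 * n) := by
        calc 1 - sigmoid (a * (x j - T j)) ≤ Real.exp (-(a * (x j - T j))) :=
              one_sub_sigmoid_le _
          _ ≤ Real.exp (-(a * η)) := Real.exp_le_exp.mpr (by linarith)
          _ = 1 / (4 * n) := haη
      rw [if_pos h, abs_sub_le_iff]
      constructor
      · linarith [sigmoid_le_one (a * (x j - T j))]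
      · linarith
    · have hd : η ≤ T j - x j := by
        have h2 := hx j
        push_neg at h
        rw [abs_of_nonpos (by linarith)] at h2; linarith
      have harg : a * (x j - T j) ≤ -(a * η) := by
        nlinarith
      have h1 : sigmoid (a * (x j - T j)) ≤ 1 / (4 * n) := by
        calc sigmoid (a * (x j - T j)) ≤ Real.exp (a * (x j - T j)) := sigmoid_le_exp _
          _ ≤ Real.exp (-(a * η)) := Real.exp_le_exp.mpr harg
          _ = 1 / (4 * n) := haη
      rw [if_neg h, sub_zero, abs_of_pos (sigmoid_pos _)]
      exact h1
  -- sum bound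
  have hsum : |(∑ j, sigmoid (a * (x j - T j))) - (k:ℝ)| ≤ 1 / 4 := by
    have hcard : (k:ℝ) = ∑ j : Fin n, (if T j < x j then (1:ℝ) else 0) := by
      rw [hk_def]
      rw [Finset.sum_boole]
    rw [hcard, ← Finset.sum_sub_distrib]
    calc |∑ j : Fin n, (sigmoid (a * (x j - T j)) - if T j < x j then (1:ℝ) else 0)|
        ≤ ∑ j : Fin n, |sigmoid (a * (x j - T j)) - if T j < x j then (1:ℝ) else 0| :=
          Finset.abs_sum_le_sum_abs _ _
      _ ≤ ∑ _j : Fin n, 1 / (4 * (n:ℝ)) := Finset.sum_le_sum (fun j _ => key j)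
      _ = (n:ℝ) * (1 / (4 * (n:ℝ))) := by
          rw [Finset.sum_const, Finset.card_univ, Fintype.card_fin, nsmul_eq_mul]
      _ = 1 / 4 := by field_simp
  set S := ∑ j, sigmoid (a * (x j - T j)) with hS_def
  have hexp : Real.exp (-(b / 4)) = δ := by
    have : -(b / 4) = Real.log δ := by rw [hb_def]; ring
    rw [this, Real.exp_log hδ0]
  rcases lt_or_gt_of_ne hne with hlt | hgt
  · -- k < n/2, rule = 0
    have h2k : 2 * k < n := by
      by_contra h
      push_neg at h
      have : (n:ℝ) ≤ 2 * k := by exact_mod_cast h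
      linarith
    have h2k1 : 2 * k + 1 ≤ n := h2k
    have hk' : (k:ℝ) ≤ (n:ℝ)/2 - 1/2 := by
      have : (2 * k + 1 : ℝ) ≤ n := by exact_mod_cast h2k1
      push_cast at this ⊢
      linarith
    have hS : S - (n:ℝ)/2 ≤ -(1/4) := by
      have := abs_le.mp hsum
      linarith [this.1, this.2]
    have hrule : twoThresholdRule n T x = 0 := by
      rw [twoThresholdRule, ← hk_def, if_neg (by linarith)]
    rw [hrule, sub_zero, twoThresholdNet, ← hS_def,
        abs_of_pos (sigmoid_pos _)]
    calc sigmoid (b * (S - (n:ℝ)/2)) ≤ Real.exp (b * (S - (n:ℝ)/2)) := sigmoid_le_exp _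
      _ ≤ Real.exp (-(b/4)) := by
          apply Real.exp_le_exp.mpr
          nlinarith
      _ = δ := hexp
  · -- k > n/2, rule = 1
    have h2k : n < 2 * k := by
      by_contra h
      push_neg at h
      have : (2 * k : ℝ) ≤ n := by exact_mod_cast h
      linarith
    have hk' : (n:ℝ)/2 + 1/2 ≤ (k:ℝ) := by
      have : (n + 1 : ℝ) ≤ 2 * k := by exact_mod_cast h2k
      push_cast at this ⊢
      linarith
    have hS : (1:ℝ)/4 ≤ S - (n:ℝ)/2 := by
      have := abs_le.mp hsum
      linarith [this.1, this.2]
    have hrule : twoThresholdRule n T x = 1 := by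
      rw [twoThresholdRule, ← hk_def, if_pos (by linarith)]
    rw [hrule, twoThresholdNet, ← hS_def, abs_sub_comm,
        abs_of_nonneg (by linarith [sigmoid_le_one (b * (S - (n:ℝ)/2))])]
    have h1 : 1 - sigmoid (b * (S - (n:ℝ)/2)) ≤ Real.exp (-(b * (S - (n:ℝ)/2))) :=
      one_sub_sigmoid_le _
    have h2 : Real.exp (-(b * (S - (n:ℝ)/2))) ≤ Real.exp (-(b/4)) := by
      apply Real.exp_le_exp.mpr
      nlinarith
    linarith [hexp ▸ (h1.trans h2)]
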